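/- Let T^{ab} = T^{(ab)}(x^i, g_{cd,I} : |I| ≤ k) be a k-th order source form with k ≥ 1 which is divergence-free. Then the top-order derivatives of T satisfy ∂^{cd,(i₁⋯i_k} T^{b)a} = 0 for all a, c, d, i₁,…,i_k, b, i.e., the symmetrization over the k+1 indices b, i₁, …, i_k of ∂^{cd,i₁⋯i_k} T^{ab} vanishes identically. -/

import Mathlib

open scoped BigOperators

namespace JetMetric

/-- Unordered multi-indices: multisets of coordinate indices. -/
abbrev MIdx (m : ℕ) := Multiset (Fin m)

/-- The (infinite) jet space of metrics on ℝ^m: base coordinates `x^i` together with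
all derivative coordinates `g_{ab,I}`. -/
abbrev Jet (m : ℕ) := (Fin m → ℝ) × (Fin m → Fin m → MIdx m → ℝ)

/-- The zeroth order coordinates `g_{ab}` as a matrix. -/
noncomputable def gMat {m : ℕ} (z : Jet m) : Matrix (Fin m) (Fin m) ℝ :=
  Matrix.of fun a b => z.2 a b 0

/-- The domain of interest: symmetric jets with nondegenerate metric. -/
def JetDom (m : ℕ) : Set (Jet m) :=
  {z | (∀ a b I, z.2 a b I = z.2 b a I) ∧ (gMat z).det ≠ 0}

/-- The symmetrized pair delta `δ^a_{(c} δ^b_{d)}`. -/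
noncomputable def pairWt {m : ℕ} (a b c d : Fin m) : ℝ :=
  ((if a = c ∧ b = d then (1 : ℝ) else 0) + (if a = d ∧ b = c then (1 : ℝ) else 0)) / 2

/-- The symmetrized multi-index delta `δ^{(i₁}_{j₁} ⋯ δ^{i_k)}_{j_k}` for unordered
multi-indices `I`, `J`. -/
noncomputable def idxWt {m : ℕ} (I J : MIdx m) : ℝ :=
  if I = J then
    (∏ s ∈ I.toFinset, (Nat.factorial (I.count s) : ℝ)) /
      (Nat.factorial (Multiset.card I) : ℝ)
  else 0

/-- The weighted partial derivative operator `∂^{ab,I}`, realized as the directional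
derivative along the symmetrized coordinate direction determined by
`∂^{ab,I} g_{cd,J} = δ^a_{(c} δ^b_{d)} δ^{(i₁}_{j₁} ⋯ δ^{i_k)}_{j_k}`. -/
noncomputable def pd {m : ℕ} (a b : Fin m) (I : MIdx m) (F : Jet m → ℝ) : Jet m → ℝ :=
  fun z => deriv (fun t : ℝ =>
    F (z.1, fun c d J => z.2 c d J + t * (pairWt a b c d * idxWt I J))) 0

/-- The partial derivative `∂/∂x^i` in a base coordinate. -/
noncomputable def xpd {m : ℕ} (i : Fin m) (F : Jet m → ℝ) : Jet m → ℝ :=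
  fun z => deriv (fun t : ℝ => F (Function.update z.1 i (z.1 i + t), z.2)) 0

/-- The partial derivative `∂/∂x^i` of a function on the base `ℝ^m`. -/
noncomputable def vpd {m : ℕ} (i : Fin m) (f : (Fin m → ℝ) → ℝ) : (Fin m → ℝ) → ℝ :=
  fun x => deriv (fun t : ℝ => f (Function.update x i (x i + t))) 0

/-- The total derivative operator
`D_i = ∂/∂x^i + Σ_{|I| ≥ 0} g_{ab,Ii} ∂^{ab,I}`, the Einstein sum running over all
ordered multi-indices `I` (lists) and all `a`, `b`. -/
noncomputable def Dt {m : ℕ} (i : Fin m) (F : Jet m → ℝ) : Jet m → ℝ :=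
  fun z => xpd i F z +
    ∑' l : List (Fin m), ∑ a : Fin m, ∑ b : Fin m,
      z.2 a b ((l : MIdx m) + {i}) * pd a b (l : MIdx m) F z

/-- The iterated total derivative `D_I = D_{i₁} ⋯ D_{i_k}` along an ordered multi-index. -/
noncomputable def DtL {m : ℕ} (l : List (Fin m)) (F : Jet m → ℝ) : Jet m → ℝ :=
  l.foldr Dt F

/-- The higher Euler–Lagrange operators
`E^{ab,I}(F) = Σ_{|J| ≥ 0} binom(|I|+|J|,|I|) (−D)_J (∂^{ab,IJ} F)`, the sum running over
all ordered multi-indices `J`. -/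
noncomputable def hEL {m : ℕ} (a b : Fin m) (I : MIdx m) (F : Jet m → ℝ) : Jet m → ℝ :=
  fun z => ∑' J : List (Fin m),
    (Nat.choose (Multiset.card I + J.length) (Multiset.card I) : ℝ) * (-1 : ℝ) ^ J.length *
      DtL J (pd a b (I + (J : MIdx m)) F) z

/-- The Euler–Lagrange operator `E^{ab}(L) = Σ_{|I| ≥ 0} (−D)_I (∂^{ab,I} L)`. -/
noncomputable def EL {m : ℕ} (a b : Fin m) (F : Jet m → ℝ) : Jet m → ℝ := hEL a b 0 F

/-- The Helmholtz components `H^{ab;cd,I} = ∂^{cd,I} T^{ab} − (−1)^{|I|} E^{ab,I}(T^{cd})`. -/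
noncomputable def Helm {m : ℕ} (T : Fin m → Fin m → Jet m → ℝ) (a b c d : Fin m)
    (I : MIdx m) : Jet m → ℝ :=
  fun z => pd c d I (T a b) z - (-1 : ℝ) ^ (Multiset.card I) * hEL a b I (T c d) z

/-- Truncated jet coordinates of order ≤ k (derivative slots labelled by ordered tuples). -/
abbrev Trunc (m k : ℕ) :=
  (Fin m → ℝ) × (Fin m → Fin m → (j : Fin (k + 1)) → ((Fin (j : ℕ) → Fin m) → ℝ))

/-- Projection from the jet space onto the truncated coordinates. -/
noncomputable def truncProj (m k : ℕ) (z : Jet m) : Trunc m k :=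
  (z.1, fun a b _j p => z.2 a b ((List.ofFn p : List (Fin m)) : MIdx m))

/-- The nondegeneracy domain in the truncated coordinates. -/
def truncDom (m k : ℕ) : Set (Trunc m k) :=
  {w | (Matrix.of fun a b => w.2 a b ⟨0, Nat.succ_pos k⟩ (fun i => i.elim0)).det ≠ 0}

/-- `F` is a differential function of order `k`: on the domain where `det g ≠ 0` it is a
smooth function of the variables `x^i` and `g_{ab,I}` with `|I| ≤ k` only. -/
def IsDF (m k : ℕ) (F : Jet m → ℝ) : Prop :=
  ∃ f : Trunc m k → ℝ, ContDiffOn ℝ (⊤ : ℕ∞) f (truncDom m k) ∧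
    ∀ z, F z = f (truncProj m k z)

/-- A source form of order `k`: symmetric components `T^{ab} = T^{(ab)}`, each a
differential function of order `k`. -/
structure SourceForm (m k : ℕ) where
  T : Fin m → Fin m → Jet m → ℝ
  symm : ∀ a b, T a b = T b a
  order : ∀ a b, IsDF m k (T a b)

/-- The inverse metric `g^{ab}`. -/
noncomputable def ginv {m : ℕ} (z : Jet m) : Matrix (Fin m) (Fin m) ℝ := (gMat z)⁻¹

/-- The Christoffel symbols `Γ^a_{bc} = ½ g^{ad}(g_{db,c} + g_{dc,b} − g_{bc,d})`. -/
noncomputable def Gamma {m : ℕ} (a b c : Fin m) (z : Jet m) : ℝ :=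
  (1 / 2) * ∑ d, ginv z a d * (z.2 d b {c} + z.2 d c {b} - z.2 b c {d})

/-- `T` is divergence-free: `D_b T^{ab} + Γ^a_{bc} T^{bc} = 0` identically. -/
def DivFree {m k : ℕ} (S : SourceForm m k) : Prop :=
  ∀ a, ∀ z ∈ JetDom m,
    (∑ b, Dt b (S.T a b) z) + (∑ b, ∑ c, Gamma a b c z * S.T b c z) = 0

/-- Evolutionary components `X_{ev,ab} = Q_{ab} − P^c g_{ab,c}` of a projectable
vector field `X = P^i ∂/∂x^i + Q_{ab} ∂^{ab}`. -/
noncomputable def Xev {m : ℕ} (P : Fin m → (Fin m → ℝ) → ℝ) (Q : Fin m → Fin m → Jet m → ℝ)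
    (a b : Fin m) : Jet m → ℝ :=
  fun z => Q a b z - ∑ c, P c z.1 * z.2 a b {c}

/-- The prolongation `pr X = P^i D_i + Σ_{|I| ≥ 0} D_I(X_{ev,ab}) ∂^{ab,I}` of a
projectable vector field, acting on differential functions. -/
noncomputable def prX {m : ℕ} (P : Fin m → (Fin m → ℝ) → ℝ) (Q : Fin m → Fin m → Jet m → ℝ)
    (F : Jet m → ℝ) : Jet m → ℝ :=
  fun z => (∑ i, P i z.1 * Dt i F z) +
    ∑' l : List (Fin m), ∑ a, ∑ b, DtL l (Xev P Q a b) z * pd a b (l : MIdx m) F z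

/-- The components of the Lie derivative of a source form along the prolongation of a
projectable vector field:
`(ℒ_X T)^{ab} = pr X(T^{ab}) + T^{cd} ∂^{ab,∅} Q_{cd} + (∂P^j/∂x^j) T^{ab}`. -/
noncomputable def LieT {m : ℕ} (P : Fin m → (Fin m → ℝ) → ℝ) (Q : Fin m → Fin m → Jet m → ℝ)
    (T : Fin m → Fin m → Jet m → ℝ) (a b : Fin m) : Jet m → ℝ :=
  fun z => prX P Q (T a b) z + (∑ c, ∑ d, T c d z * pd a b 0 (Q c d) z)
    + (∑ j, vpd j (P j) z.1) * T a b z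

/-- The `∂^{ab}`-components `Q_{ab} = −2 ξ^c_{,(a} g_{b)c}` of the lift `X_ξ` of a vector
field `ξ` on `ℝ^m` to the bundle of metrics. -/
noncomputable def liftQ {m : ℕ} (ξ : Fin m → (Fin m → ℝ) → ℝ) (a b : Fin m) : Jet m → ℝ :=
  fun z => -∑ c, (vpd a (ξ c) z.1 * z.2 b c 0 + vpd b (ξ c) z.1 * z.2 a c 0)

/-- `T` is natural: `pr X_ξ(T^{ab}) − 2 ξ^{(a}_{,c} T^{b)c} + ξ^c_{,c} T^{ab} = 0`
identically, for every smooth vector field `ξ` on `ℝ^m`. -/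
def Natural {m k : ℕ} (S : SourceForm m k) : Prop :=
  ∀ ξ : Fin m → (Fin m → ℝ) → ℝ, (∀ c, ContDiff ℝ (⊤ : ℕ∞) (ξ c)) →
    ∀ a b, ∀ z ∈ JetDom m,
      prX ξ (liftQ ξ) (S.T a b) z
        - ((∑ c, vpd c (ξ a) z.1 * S.T b c z) + (∑ c, vpd c (ξ b) z.1 * S.T a c z))
        + (∑ c, vpd c (ξ c) z.1) * S.T a b z = 0

/-- `T` admits translational conservation laws: `E^{hk}(g_{ab,p} T^{ab}) = 0` identically. -/
def TranslCL {m k : ℕ} (S : SourceForm m k) : Prop :=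
  ∀ p h k', ∀ z ∈ JetDom m,
    EL h k' (fun w => ∑ a, ∑ b, w.2 a b {p} * S.T a b w) z = 0

/-- `T` is locally variational: all Helmholtz components vanish identically. -/
def LocallyVariational {m k : ℕ} (S : SourceForm m k) : Prop :=
  ∀ a b c d (I : MIdx m), ∀ z ∈ JetDom m, Helm S.T a b c d I z = 0

/-- `F` has no explicit dependence on the base coordinates `x^i`. -/
def NoExplicitX {m : ℕ} (F : Jet m → ℝ) : Prop :=
  ∀ x x' g, F (x, g) = F (x', g)


section Aux

variable {m k : ℕ}

lemma truncProj_congr {z w : Jet m}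
    (h1 : z.1 = w.1) (h2 : ∀ e f K, Multiset.card K ≤ k → z.2 e f K = w.2 e f K) :
    truncProj m k z = truncProj m k w := by
  unfold truncProj
  refine Prod.ext h1 ?_
  funext e f j p
  refine h2 e f _ ?_
  simpa using j.is_le

lemma isDF_congr {F : Jet m → ℝ} (hF : IsDF m k F) {z w : Jet m}
    (h1 : z.1 = w.1) (h2 : ∀ e f K, Multiset.card K ≤ k → z.2 e f K = w.2 e f K) :
    F z = F w := by
  obtain ⟨f, -, hf⟩ := hF
  rw [hf, hf, truncProj_congr h1 h2]

lemma pd_congr {F : Jet m → ℝ} (hF : IsDF m k F) (e f : Fin m) (I : MIdx m)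
    {z w : Jet m} (h1 : z.1 = w.1)
    (h2 : ∀ e' f' K, Multiset.card K ≤ k → z.2 e' f' K = w.2 e' f' K) :
    pd e f I F z = pd e f I F w := by
  unfold pd
  have heq : (fun t : ℝ => F (z.1, fun c d J => z.2 c d J + t * (pairWt e f c d * idxWt I J)))
      = (fun t : ℝ => F (w.1, fun c d J => w.2 c d J + t * (pairWt e f c d * idxWt I J))) := by
    funext t
    exact isDF_congr hF h1 (fun e' f' K hK => by simp only; rw [h2 e' f' K hK])
  rw [heq]

lemma idxWt_card_ne {I K : MIdx m} (h : Multiset.card I ≠ Multiset.card K) : idxWt I K = 0 := by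
  unfold idxWt
  rw [if_neg]
  rintro rfl; exact h rfl

lemma pd_high {F : Jet m → ℝ} (hF : IsDF m k F) (e f : Fin m) {I : MIdx m}
    (hI : k < Multiset.card I) (z : Jet m) : pd e f I F z = 0 := by
  unfold pd
  have heq : (fun t : ℝ => F (z.1, fun c d J => z.2 c d J + t * (pairWt e f c d * idxWt I J)))
      = fun _ => F z := by
    funext t
    refine isDF_congr hF rfl ?_
    intro e' f' K hK
    have h0 : idxWt I K = 0 := idxWt_card_ne (by omega)
    simp only [h0, mul_zero, add_zero]
  rw [heq]
  exact deriv_const 0 _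

lemma xpd_congr {F : Jet m → ℝ} (hF : IsDF m k F) (i : Fin m) {z w : Jet m}
    (h1 : z.1 = w.1) (h2 : ∀ e f K, Multiset.card K ≤ k → z.2 e f K = w.2 e f K) :
    xpd i F z = xpd i F w := by
  unfold xpd
  rw [h1]
  congr 1
  funext t
  exact isDF_congr hF rfl h2

lemma pd_swap (e f : Fin m) (I : MIdx m) (F : Jet m → ℝ) (z : Jet m) :
    pd e f I F z = pd f e I F z := by
  unfold pd
  have hpw : ∀ c d : Fin m, pairWt e f c d = pairWt f e c d := by
    intro c d; unfold pairWt
    split_ifs <;> first | (exfalso; tauto) | ring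
  simp only [hpw]

/-- All lists of length at most `k`. -/
def listsLe (m k : ℕ) : Finset (List (Fin m)) :=
  (Finset.range (k+1)).biUnion fun n =>
    Finset.image (fun p : Fin n → Fin m => List.ofFn p) Finset.univ

lemma exists_ofFn_of_length {α : Type*} {k : ℕ} (l : List α) (h : l.length = k) :
    ∃ p : Fin k → α, List.ofFn p = l := by
  subst h; exact ⟨l.get, List.ofFn_get l⟩

lemma mem_listsLe {l : List (Fin m)} : l ∈ listsLe m k ↔ l.length ≤ k := by
  unfold listsLe
  simp only [Finset.mem_biUnion, Finset.mem_range, Finset.mem_image, Finset.mem_univ, true_and]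
  constructor
  · rintro ⟨n, hn, p, rfl⟩
    simpa using Nat.lt_succ_iff.mp hn
  · intro h
    obtain ⟨p, hp⟩ := exists_ofFn_of_length l rfl
    exact ⟨l.length, Nat.lt_succ_of_le h, p, hp⟩

lemma Dt_apply {F : Jet m → ℝ} (hF : IsDF m k F) (i : Fin m) (z : Jet m) :
    Dt i F z = xpd i F z +
      ∑ l ∈ listsLe m k, ∑ e, ∑ f,
        z.2 e f ((l : MIdx m) + {i}) * pd e f (l : MIdx m) F z := by
  unfold Dt
  congr 1
  refine tsum_eq_sum ?_
  intro l hl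
  have hlen : k < l.length := by
    by_contra h
    exact hl (mem_listsLe.mpr (by omega))
  have hp : ∀ e f : Fin m, pd e f (l : MIdx m) F z = 0 := fun e f =>
    pd_high hF e f (by simpa using hlen) z
  simp [hp]

lemma pairWt_sum (c d : Fin m) (P : Fin m → Fin m → ℝ) (hP : ∀ e f, P e f = P f e) :
    (∑ e, ∑ f, pairWt c d e f * P e f) = P c d := by
  have h : ∀ e f : Fin m, pairWt c d e f * P e f
      = ((if d = f then (if c = e then P e f else 0) else 0)
        + (if c = f then (if d = e then P e f else 0) else 0)) / 2 := by
    intro e f; unfold pairWt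
    split_ifs <;> first | (exfalso; tauto) | ring
  simp only [h, ← Finset.sum_div, Finset.sum_add_distrib, Finset.sum_ite_eq,
    Finset.mem_univ, if_true]
  rw [hP d c]
  ring

lemma exists_perm_comp {n : ℕ} {α : Type*} [LinearOrder α] {v q : Fin n → α}
    (h : (↑(List.ofFn v) : Multiset α) = (↑(List.ofFn q) : Multiset α)) :
    ∃ σ : Equiv.Perm (Fin n), v ∘ σ = q := by
  have hperm : List.Perm (List.ofFn v) (List.ofFn q) := Multiset.coe_eq_coe.mp h
  have h1 : List.Perm (List.ofFn (v ∘ Tuple.sort v)) (List.ofFn (q ∘ Tuple.sort q)) :=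
    (((Tuple.sort v).ofFn_comp_perm v).trans hperm).trans
      ((Tuple.sort q).ofFn_comp_perm q).symm
  have h2 : v ∘ Tuple.sort v = q ∘ Tuple.sort q :=
    List.ofFn_injective (List.Perm.eq_of_sortedLE
      (Tuple.monotone_sort v).sortedLE_ofFn (Tuple.monotone_sort q).sortedLE_ofFn h1)
  refine ⟨Tuple.sort v * (Tuple.sort q)⁻¹, ?_⟩
  funext x
  have h3 := congrFun h2 ((Tuple.sort q)⁻¹ x)
  simpa using h3

lemma card_fiber_eq {n : ℕ} {α : Type*} [DecidableEq α] (v q : Fin n → α)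
    (σ₀ : Equiv.Perm (Fin n)) (h : v ∘ σ₀ = q) :
    (Finset.univ.filter fun σ : Equiv.Perm (Fin n) => v ∘ σ = q).card
      = (Finset.univ.filter fun σ : Equiv.Perm (Fin n) => v ∘ σ = v).card := by
  refine Finset.card_bij' (fun σ _ => σ * σ₀⁻¹) (fun τ _ => τ * σ₀) ?_ ?_ ?_ ?_
  · intro σ hσ
    simp only [Finset.mem_filter, Finset.mem_univ, true_and] at hσ ⊢
    funext x
    have := congrFun hσ ((σ₀⁻¹ : Equiv.Perm (Fin n)) x)
    have h2 := congrFun h ((σ₀⁻¹ : Equiv.Perm (Fin n)) x)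
    simp only [Function.comp_apply, Equiv.Perm.mul_apply] at this h2 ⊢
    rw [this, ← h2]
    simp
  · intro τ hτ
    simp only [Finset.mem_filter, Finset.mem_univ, true_and] at hτ ⊢
    funext x
    have := congrFun hτ (σ₀ x)
    have h2 := congrFun h x
    simp only [Function.comp_apply, Equiv.Perm.mul_apply] at this h2 ⊢
    rw [this, h2]
  · intro σ _; simp [mul_assoc]
  · intro τ _; simp [mul_assoc]

end Aux

/-- For a divergence-free `k`-th order source form (`k ≥ 1`), the
symmetrization of `∂^{cd,i₁⋯i_k} T^{ab}` over the `k+1` indices `b, i₁, …, i_k` vanishes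
identically. Here `v 0` plays the role of `b` and `v 1, …, v k` the roles of
`i₁, …, i_k`. -/
theorem stmt10 {m k : ℕ} (hk : 1 ≤ k) (S : SourceForm m k) (hdiv : DivFree S) :
    ∀ (a c d : Fin m) (v : Fin (k + 1) → Fin m), ∀ z ∈ JetDom m,
      (1 / (Nat.factorial (k + 1) : ℝ)) *
        ∑ σ : Equiv.Perm (Fin (k + 1)),
          pd c d ((List.ofFn fun t : Fin k => v (σ t.succ)) : MIdx m)
            (S.T a (v (σ 0))) z = 0 := by
  intro a c d v z hz
  obtain ⟨hsym, hdet⟩ := hz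
  set J : MIdx m := ((List.ofFn v : List (Fin m)) : MIdx m) with hJ
  have hcardJ : Multiset.card J = k + 1 := by simp [hJ]
  set zt : ℝ → Jet m := fun t =>
    (z.1, fun e f K => z.2 e f K + t * (pairWt c d e f * idxWt J K)) with hzt
  have hidx0 : ∀ K : MIdx m, Multiset.card K ≤ k → idxWt J K = 0 := fun K hK =>
    idxWt_card_ne (by omega)
  have hfst : ∀ t : ℝ, (zt t).1 = z.1 := by intro t; rw [hzt]
  have hsnd : ∀ (t : ℝ) (e f : Fin m) (K : MIdx m),
      (zt t).2 e f K = z.2 e f K + t * (pairWt c d e f * idxWt J K) := by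
    intro t e f K; rw [hzt]
  have hagree : ∀ t : ℝ, ∀ e f K, Multiset.card K ≤ k → (zt t).2 e f K = z.2 e f K := by
    intro t e f K hK
    rw [hsnd, hidx0 K hK, mul_zero, mul_zero, add_zero]
  have hgMat : ∀ t : ℝ, gMat (zt t) = gMat z := by
    intro t; ext e f
    show (zt t).2 e f 0 = z.2 e f 0
    exact hagree t e f 0 (by simp)
  have hmem : ∀ t : ℝ, zt t ∈ JetDom m := by
    intro t
    refine ⟨?_, ?_⟩
    · intro e f I
      rw [hsnd, hsnd, hsym e f I]
      have hpw : pairWt c d e f = pairWt c d f e := by unfold pairWt; ring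
      rw [hpw]
    · rw [hgMat t]; exact hdet
  -- the divergence identity along the curve t ↦ zt t
  have hEq : ∀ t : ℝ,
      (∑ b, (xpd b (S.T a b) z
        + ∑ l ∈ listsLe m k, ∑ e, ∑ f,
            (z.2 e f ((l : MIdx m) + {b}) + t * (pairWt c d e f * idxWt J ((l : MIdx m) + {b})))
              * pd e f (l : MIdx m) (S.T a b) z))
      + (∑ b, ∑ c', Gamma a b c' z * S.T b c' z) = 0 := by
    intro t
    have h0 := hdiv a (zt t) (hmem t)
    have e1 : ∀ b, Dt b (S.T a b) (zt t)
        = xpd b (S.T a b) z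
          + ∑ l ∈ listsLe m k, ∑ e, ∑ f,
              (z.2 e f ((l : MIdx m) + {b}) + t * (pairWt c d e f * idxWt J ((l : MIdx m) + {b})))
                * pd e f (l : MIdx m) (S.T a b) z := by
      intro b
      rw [Dt_apply (S.order a b) b (zt t),
        xpd_congr (S.order a b) b (hfst t) (hagree t)]
      congr 1
      refine Finset.sum_congr rfl fun l _ => Finset.sum_congr rfl fun e _ =>
        Finset.sum_congr rfl fun f _ => ?_
      rw [pd_congr (S.order a b) e f _ (hfst t) (hagree t), hsnd]
    have e2 : ∀ b c', Gamma a b c' (zt t) = Gamma a b c' z := by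
      intro b c'
      unfold Gamma ginv
      rw [hgMat t]
      refine congrArg _ (Finset.sum_congr rfl fun d' _ => ?_)
      rw [hagree t d' b {c'} (by simpa using hk), hagree t d' c' {b} (by simpa using hk),
        hagree t b c' {d'} (by simpa using hk)]
    have e3 : ∀ b c', S.T b c' (zt t) = S.T b c' z := fun b c' =>
      isDF_congr (S.order b c') (hfst t) (hagree t)
    simp only [e1, e2, e3] at h0
    exact h0
  -- extract the linear-in-t coefficient
  have hB : (∑ b : Fin m, ∑ l ∈ listsLe m k, ∑ e, ∑ f,
      (pairWt c d e f * idxWt J ((l : MIdx m) + {b}))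
        * pd e f (l : MIdx m) (S.T a b) z) = 0 := by
    have h1 := hEq 1
    have h0 := hEq 0
    have hsplit : ∀ t : ℝ,
        (∑ b : Fin m, (xpd b (S.T a b) z + ∑ l ∈ listsLe m k, ∑ e, ∑ f,
          (z.2 e f ((l : MIdx m) + {b}) + t * (pairWt c d e f * idxWt J ((l : MIdx m) + {b})))
            * pd e f (l : MIdx m) (S.T a b) z))
        = (∑ b : Fin m, (xpd b (S.T a b) z + ∑ l ∈ listsLe m k, ∑ e, ∑ f,
            z.2 e f ((l : MIdx m) + {b}) * pd e f (l : MIdx m) (S.T a b) z))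
          + t * (∑ b : Fin m, ∑ l ∈ listsLe m k, ∑ e, ∑ f,
            (pairWt c d e f * idxWt J ((l : MIdx m) + {b}))
              * pd e f (l : MIdx m) (S.T a b) z) := by
      intro t
      rw [Finset.mul_sum, ← Finset.sum_add_distrib]
      refine Finset.sum_congr rfl fun b _ => ?_
      rw [Finset.mul_sum, add_assoc, ← Finset.sum_add_distrib]
      congr 1
      refine Finset.sum_congr rfl fun l _ => ?_
      rw [Finset.mul_sum, ← Finset.sum_add_distrib]
      refine Finset.sum_congr rfl fun e _ => ?_
      rw [Finset.mul_sum, ← Finset.sum_add_distrib]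
      refine Finset.sum_congr rfl fun f _ => ?_
      ring
    rw [hsplit 1] at h1
    rw [hsplit 0] at h0
    simp only [zero_mul, add_zero, one_mul] at h1 h0
    linarith
  -- symmetrize away the pairWt factor
  have hB2 : (∑ b : Fin m, ∑ l ∈ listsLe m k,
      idxWt J ((l : MIdx m) + {b}) * pd c d (l : MIdx m) (S.T a b) z) = 0 := by
    have hrw : ∀ (b : Fin m), ∀ l ∈ listsLe m k,
        (∑ e, ∑ f, (pairWt c d e f * idxWt J ((l : MIdx m) + {b}))
            * pd e f (l : MIdx m) (S.T a b) z)
        = idxWt J ((l : MIdx m) + {b}) * pd c d (l : MIdx m) (S.T a b) z := by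
      intro b l _
      have hstep : (∑ e, ∑ f, (pairWt c d e f * idxWt J ((l : MIdx m) + {b}))
            * pd e f (l : MIdx m) (S.T a b) z)
          = ∑ e, ∑ f, pairWt c d e f
              * (idxWt J ((l : MIdx m) + {b}) * pd e f (l : MIdx m) (S.T a b) z) :=
        Finset.sum_congr rfl fun e _ => Finset.sum_congr rfl fun f _ => by ring
      rw [hstep]
      exact pairWt_sum c d _ (fun e f => by rw [pd_swap])
    calc (∑ b : Fin m, ∑ l ∈ listsLe m k,
          idxWt J ((l : MIdx m) + {b}) * pd c d (l : MIdx m) (S.T a b) z)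
        = ∑ b : Fin m, ∑ l ∈ listsLe m k, ∑ e, ∑ f,
            (pairWt c d e f * idxWt J ((l : MIdx m) + {b}))
              * pd e f (l : MIdx m) (S.T a b) z :=
          Finset.sum_congr rfl fun b _ => Finset.sum_congr rfl fun l hl => (hrw b l hl).symm
      _ = 0 := hB
  -- restrict to lists of length exactly k, indexed by functions
  have hstar : (∑ b : Fin m, ∑ p : Fin k → Fin m,
      idxWt J ((↑(List.ofFn p) : MIdx m) + {b})
        * pd c d (↑(List.ofFn p) : MIdx m) (S.T a b) z) = 0 := by
    have himg_sub : (Finset.univ.image fun p : Fin k → Fin m => List.ofFn p) ⊆ listsLe m k := by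
      intro l hl
      simp only [Finset.mem_image, Finset.mem_univ, true_and] at hl
      obtain ⟨p, rfl⟩ := hl
      exact mem_listsLe.mpr (by simp)
    calc (∑ b : Fin m, ∑ p : Fin k → Fin m, idxWt J ((↑(List.ofFn p) : MIdx m) + {b})
            * pd c d (↑(List.ofFn p) : MIdx m) (S.T a b) z)
        = ∑ b : Fin m, ∑ l ∈ (Finset.univ.image fun p : Fin k → Fin m => List.ofFn p),
            idxWt J ((l : MIdx m) + {b}) * pd c d (l : MIdx m) (S.T a b) z := by
          refine Finset.sum_congr rfl fun b _ => ?_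
          rw [Finset.sum_image (fun x _ y _ h => List.ofFn_injective h)]
      _ = ∑ b : Fin m, ∑ l ∈ listsLe m k,
            idxWt J ((l : MIdx m) + {b}) * pd c d (l : MIdx m) (S.T a b) z := by
          refine Finset.sum_congr rfl fun b _ => ?_
          refine Finset.sum_subset himg_sub ?_
          intro l hl hnot
          have hlen : l.length ≠ k := by
            intro hlen
            obtain ⟨p, rfl⟩ := exists_ofFn_of_length l hlen
            exact hnot (Finset.mem_image_of_mem _ (Finset.mem_univ p))
          have hzero : idxWt J ((l : MIdx m) + {b}) = 0 := by
            refine idxWt_card_ne ?_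
            simp only [Multiset.card_add, Multiset.coe_card, Multiset.card_singleton, hcardJ]
            omega
          rw [hzero, zero_mul]
      _ = 0 := hB2
  -- reindex by functions q : Fin (k+1) → Fin m
  have hcons : ∀ (b : Fin m) (M : MIdx m), M + {b} = b ::ₘ M := fun b M => by
    rw [add_comm, Multiset.singleton_add]
  have hofn : ∀ q : Fin (k + 1) → Fin m,
      (↑(List.ofFn q) : MIdx m)
        = (↑(List.ofFn fun i : Fin k => q i.succ) : MIdx m) + {q 0} := by
    intro q
    rw [List.ofFn_succ, hcons]
    exact Multiset.cons_coe _ _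
  have hq : (∑ q : Fin (k + 1) → Fin m,
      idxWt J (↑(List.ofFn q) : MIdx m)
        * pd c d (↑(List.ofFn fun i : Fin k => q i.succ) : MIdx m) (S.T a (q 0)) z) = 0 := by
    let E : (Fin (k + 1) → Fin m) ≃ (Fin m) × (Fin k → Fin m) :=
      { toFun := fun q => (q 0, fun i => q i.succ)
        invFun := fun bp => Fin.cons bp.1 bp.2
        left_inv := fun q => Fin.cons_self_tail q
        right_inv := fun bp => by simp }
    calc (∑ q : Fin (k + 1) → Fin m,
          idxWt J (↑(List.ofFn q) : MIdx m)
            * pd c d (↑(List.ofFn fun i : Fin k => q i.succ) : MIdx m) (S.T a (q 0)) z)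
        = ∑ bp : (Fin m) × (Fin k → Fin m),
            idxWt J ((↑(List.ofFn bp.2) : MIdx m) + {bp.1})
              * pd c d (↑(List.ofFn bp.2) : MIdx m) (S.T a bp.1) z := by
          refine Fintype.sum_equiv E _ _ ?_
          intro q
          rw [hofn q]
          rfl
      _ = ∑ b : Fin m, ∑ p : Fin k → Fin m,
            idxWt J ((↑(List.ofFn p) : MIdx m) + {b})
              * pd c d (↑(List.ofFn p) : MIdx m) (S.T a b) z := Fintype.sum_prod_type _
      _ = 0 := hstar
  -- remove the (nonzero) weight
  have hWne : ((∏ s ∈ J.toFinset, (Nat.factorial (J.count s) : ℝ)) /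
      (Nat.factorial (Multiset.card J) : ℝ)) ≠ 0 := by
    apply div_ne_zero
    · refine Finset.prod_ne_zero_iff.mpr fun s _ => ?_
      exact Nat.cast_ne_zero.mpr (Nat.factorial_ne_zero _)
    · exact Nat.cast_ne_zero.mpr (Nat.factorial_ne_zero _)
  have hidxJ : ∀ M : MIdx m, idxWt J M
      = if J = M then ((∏ s ∈ J.toFinset, (Nat.factorial (J.count s) : ℝ)) /
          (Nat.factorial (Multiset.card J) : ℝ)) else 0 := fun M => rfl
  have hQ : (∑ q ∈ Finset.univ.filter
      (fun q : Fin (k + 1) → Fin m => J = (↑(List.ofFn q) : MIdx m)),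
        pd c d (↑(List.ofFn fun i : Fin k => q i.succ) : MIdx m) (S.T a (q 0)) z) = 0 := by
    have h2 : ((∏ s ∈ J.toFinset, (Nat.factorial (J.count s) : ℝ)) /
        (Nat.factorial (Multiset.card J) : ℝ))
        * (∑ q ∈ Finset.univ.filter
            (fun q : Fin (k + 1) → Fin m => J = (↑(List.ofFn q) : MIdx m)),
          pd c d (↑(List.ofFn fun i : Fin k => q i.succ) : MIdx m) (S.T a (q 0)) z) = 0 := by
      have hterm : ∀ q : Fin (k + 1) → Fin m,
          (if J = (↑(List.ofFn q) : MIdx m) then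
              ((∏ s ∈ J.toFinset, (Nat.factorial (J.count s) : ℝ)) /
                  (Nat.factorial (Multiset.card J) : ℝ))
                * pd c d (↑(List.ofFn fun i : Fin k => q i.succ) : MIdx m) (S.T a (q 0)) z
            else 0)
          = idxWt J (↑(List.ofFn q) : MIdx m)
              * pd c d (↑(List.ofFn fun i : Fin k => q i.succ) : MIdx m) (S.T a (q 0)) z := by
        intro q
        rw [hidxJ]
        split_ifs <;> simp
      rw [Finset.mul_sum, Finset.sum_filter]
      rw [Finset.sum_congr rfl fun q _ => hterm q]
      exact hq
    rcases mul_eq_zero.mp h2 with h | h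
    · exact absurd h hWne
    · exact h
  -- compare with the sum over permutations
  have hfin : (∑ σ : Equiv.Perm (Fin (k + 1)),
      pd c d ((List.ofFn fun t : Fin k => v (σ t.succ)) : MIdx m) (S.T a (v (σ 0))) z) = 0 := by
    have hsc : (∑ σ : Equiv.Perm (Fin (k + 1)),
        pd c d ((List.ofFn fun t : Fin k => v (σ t.succ)) : MIdx m) (S.T a (v (σ 0))) z)
        = ∑ b ∈ (Finset.univ.image fun σ : Equiv.Perm (Fin (k + 1)) => v ∘ σ),
            (Finset.univ.filter fun σ : Equiv.Perm (Fin (k + 1)) => v ∘ σ = b).card •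
              pd c d (↑(List.ofFn fun i : Fin k => b i.succ) : MIdx m) (S.T a (b 0)) z :=
      Finset.sum_comp (s := Finset.univ)
        (fun q : Fin (k + 1) → Fin m =>
          pd c d (↑(List.ofFn fun i : Fin k => q i.succ) : MIdx m) (S.T a (q 0)) z)
        (fun σ : Equiv.Perm (Fin (k + 1)) => v ∘ σ)
    have himage : (Finset.univ.image fun σ : Equiv.Perm (Fin (k + 1)) => v ∘ σ)
        = Finset.univ.filter
            (fun q : Fin (k + 1) → Fin m => J = (↑(List.ofFn q) : MIdx m)) := by
      ext q
      simp only [Finset.mem_image, Finset.mem_univ, true_and, Finset.mem_filter]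
      constructor
      · rintro ⟨σ, rfl⟩
        rw [hJ]
        exact (Multiset.coe_eq_coe.mpr (σ.ofFn_comp_perm v)).symm
      · intro hq'
        obtain ⟨σ, hσ⟩ := exists_perm_comp (v := v) (q := q) (by rw [← hJ]; exact hq')
        exact ⟨σ, hσ⟩
    have hcardfib : ∀ q ∈ Finset.univ.filter
        (fun q : Fin (k + 1) → Fin m => J = (↑(List.ofFn q) : MIdx m)),
        (Finset.univ.filter fun σ : Equiv.Perm (Fin (k + 1)) => v ∘ σ = q).card
          = (Finset.univ.filter fun σ : Equiv.Perm (Fin (k + 1)) => v ∘ σ = v).card := by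
      intro q hq'
      simp only [Finset.mem_filter, Finset.mem_univ, true_and] at hq'
      obtain ⟨σ₀, hσ₀⟩ := exists_perm_comp (v := v) (q := q) (by rw [← hJ]; exact hq')
      exact card_fiber_eq v q σ₀ hσ₀
    rw [hsc, himage]
    rw [Finset.sum_congr rfl (fun q hq' => by rw [hcardfib q hq'])]
    rw [← Finset.smul_sum, hQ, smul_zero]
  rw [hfin, mul_zero]

end JetMetric
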